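/- For the star graph S_n on n vertices (one center adjacent to n−1 leaves), with n ≥ 4, the HOMFLY polynomial satisfies f(S_n) = z^{n−2}/a^n + ((z^{n−1}+z^{n−3})/a^{n−1})·P₁ + Σ_{k=2}^{n−2} (z^{k−2}/a^{k})·P₁^{n−k}, where P₁ = (z+z⁻¹)/a − z⁻¹/a³. -/

import Mathlib

open scoped Classical

noncomputable section

abbrev K : Type := FractionRing (MvPolynomial Bool ℚ)

/-- The variable `a` of the HOMFLY polynomial. -/
def A : K := algebraMap (MvPolynomial Bool ℚ) K (MvPolynomial.X false)

/-- The variable `z` of the HOMFLY polynomial. -/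
def Z : K := algebraMap (MvPolynomial Bool ℚ) K (MvPolynomial.X true)

/-- A rule assigning a value to every finite simple graph. -/
abbrev GraphFun : Type 1 :=
  ∀ (V : Type) [Fintype V] [DecidableEq V], SimpleGraph V → K

/-- `v` is a leaf whose unique neighbor is `w`. -/
def IsLeaf {V : Type} (G : SimpleGraph V) (v w : V) : Prop :=
  G.neighborSet v = {w}

/-- The defining recursion of the HOMFLY polynomial of a forest:
value `1` on the empty graph, `(z+z⁻¹)/a − z⁻¹/a³` on a single vertex,
the leaf-removal recursion, and multiplicativity over disjoint unions
(formulated via vertex subsets with no crossing edges). -/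
def HomflyRules (f : GraphFun) : Prop :=
  (∀ (V : Type) [Fintype V] [DecidableEq V] (G : SimpleGraph V),
      IsEmpty V → f V G = 1) ∧
  (∀ (V : Type) [Fintype V] [DecidableEq V] (G : SimpleGraph V),
      Fintype.card V = 1 → f V G = (Z + Z⁻¹) / A - Z⁻¹ / A ^ 3) ∧
  (∀ (V : Type) [Fintype V] [DecidableEq V] (G : SimpleGraph V),
      G.IsAcyclic → ∀ v w : V, IsLeaf G v w →
      f V G = (Z / A) * f ↥{x : V | x ≠ v} (G.induce {x : V | x ≠ v}) +
        (1 / A ^ 2) * f ↥{x : V | x ≠ v ∧ x ≠ w} (G.induce {x : V | x ≠ v ∧ x ≠ w})) ∧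
  (∀ (V : Type) [Fintype V] [DecidableEq V] (G : SimpleGraph V),
      G.IsAcyclic → ∀ s : Set V, (∀ x ∈ s, ∀ y ∉ s, ¬ G.Adj x y) →
      f V G = f ↥s (G.induce s) * f ↥sᶜ (G.induce sᶜ))

/-- The star graph on `n` vertices: the center `0` joined to the `n − 1` leaves. -/
def starGraph (n : ℕ) : SimpleGraph (Fin n) :=
  SimpleGraph.fromRel (fun i _ => (i : ℕ) = 0)

/- ==== auxiliary ==== -/

def Pone : K := (Z + Z⁻¹) / A - Z⁻¹ / A ^ 3

def gg : ℕ → K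
  | 0 => 1
  | 1 => Pone
  | (n+2) => (Z / A) * gg (n+1) + (1 / A ^ 2) * Pone ^ n

lemma gg_step (n : ℕ) : gg (n+2) = (Z / A) * gg (n+1) + (1 / A ^ 2) * Pone ^ n := rfl

/-- acyclicity of graphs all of whose edges go through `c` -/
lemma star_acyclic {V : Type} (G : SimpleGraph V) (c : V)
    (h : ∀ x y, G.Adj x y → x = c ∨ y = c) : G.IsAcyclic := by
  rw [SimpleGraph.isAcyclic_iff_forall_adj_isBridge]
  intro v w hvw
  -- wlog : v = c
  have key : ∀ y : V, G.Adj c y → G.IsBridge s(c, y) := by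
    intro y hcy
    rw [SimpleGraph.isBridge_iff]
    have hyc : y ≠ c := (G.ne_of_adj hcy).symm
    have hno : ∀ z, ¬ (G \ SimpleGraph.fromEdgeSet {s(c, y)}).Adj y z := by
      intro z hz
      obtain ⟨h1, h2⟩ := hz
      rcases h y z h1 with h3 | h3
      · exact hyc h3
      · subst h3
        exact h2 (by simp [SimpleGraph.fromEdgeSet_adj, Sym2.eq_swap, hyc])
    rintro ⟨p⟩
    have p' := p.reverse
    cases p' with
    | nil => exact hyc rfl
    | cons hadj q => exact hno _ hadj
  rcases h v w hvw with rfl | rfl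
  · exact key w hvw
  · have := key v hvw.symm
    rwa [Sym2.eq_swap] at this

lemma f_irrel (f : GraphFun) {X : Type} (i1 i2 : Fintype X) (d1 d2 : DecidableEq X)
    (G : SimpleGraph X) : @f X i1 d1 G = @f X i2 d2 G := by
  cases Subsingleton.elim i1 i2
  cases Subsingleton.elim d1 d2
  rfl

lemma bot_val (f : GraphFun) (hf : HomflyRules f) :
    ∀ (m : ℕ) (V : Type) [Fintype V] [DecidableEq V] (G : SimpleGraph V),
      (∀ x y, ¬ G.Adj x y) → Fintype.card V = m → f V G = Pone ^ m := by
  obtain ⟨h0, h1, h2, h3⟩ := hf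
  intro m
  induction m with
  | zero =>
    intro V _ _ G hG hcard
    rw [h0 V G (Fintype.card_eq_zero_iff.mp hcard)]
    simp
  | succ m ih =>
    intro V _ _ G hG hcard
    have hpos : 0 < Fintype.card V := by omega
    obtain ⟨v⟩ := Fintype.card_pos_iff.mp hpos
    have hac : G.IsAcyclic := star_acyclic G v (fun x y hxy => absurd hxy (hG x y))
    have key := h3 V G hac ({v} : Set V) (fun x _ y _ => hG x y)
    have e1 : ∀ (i : Fintype ↥({v} : Set V)) (d : DecidableEq ↥({v} : Set V)),
        @f _ i d (G.induce ({v} : Set V)) = Pone := by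
      intro i d
      rw [f_irrel f i inferInstance d inferInstance]
      rw [h1]
      · rfl
      · simp
    have e2 : ∀ (i : Fintype ↥({v} : Set V)ᶜ) (d : DecidableEq ↥({v} : Set V)ᶜ),
        @f _ i d (G.induce ({v} : Set V)ᶜ) = Pone ^ m := by
      intro i d
      rw [f_irrel f i inferInstance d inferInstance]
      apply ih
      · intro x y hxy
        exact hG x y hxy
      · rw [Fintype.card_compl_set]
        simp [hcard]
    rw [key, e1, e2]
    ring

lemma star_val (f : GraphFun) (hf : HomflyRules f) :
    ∀ (m : ℕ) (V : Type) [Fintype V] [DecidableEq V] (G : SimpleGraph V) (c : V),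
      (∀ x y, G.Adj x y ↔ (x = c ∧ y ≠ c) ∨ (y = c ∧ x ≠ c)) →
      Fintype.card V = m → f V G = gg m := by
  obtain ⟨h0, h1, h2, h3⟩ := hf
  intro m
  induction m using Nat.strong_induction_on with
  | _ m ih =>
  match m with
  | 0 => intro V _ _ G c hG hcard
         exact ((Fintype.card_eq_zero_iff.mp hcard).false c).elim
  | 1 => intro V _ _ G c hG hcard
         rw [h1 V G hcard]; rfl
  | (m+2) =>
    intro V _ _ G c hG hcard
    have hlt : 1 < Fintype.card V := by omega
    obtain ⟨v, hvc⟩ := Fintype.exists_ne_of_one_lt_card hlt c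
    have hedge : ∀ x y, G.Adj x y → x = c ∨ y = c := by
      intro x y hxy; rcases (hG x y).mp hxy with ⟨h, _⟩ | ⟨h, _⟩
      · exact Or.inl h
      · exact Or.inr h
    have hac : G.IsAcyclic := star_acyclic G c hedge
    have hleaf : IsLeaf G v c := by
      ext x
      simp only [SimpleGraph.mem_neighborSet, Set.mem_singleton_iff, hG]
      constructor
      · rintro (⟨h, _⟩ | ⟨h, _⟩)
        · exact absurd h hvc
        · exact h
      · rintro rfl
        exact Or.inr ⟨rfl, hvc⟩
    have key := h2 V G hac v c hleaf
    have e1 : ∀ (i : Fintype ↥{x : V | x ≠ v}) (d : DecidableEq ↥{x : V | x ≠ v}),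
        @f _ i d (G.induce {x : V | x ≠ v}) = gg (m+1) := by
      intro i d
      rw [f_irrel f i inferInstance d inferInstance]
      apply ih (m+1) (by omega) _ _ ⟨c, Ne.symm hvc⟩
      · rintro ⟨x, hx⟩ ⟨y, hy⟩
        simp only [SimpleGraph.comap_adj, Function.Embedding.coe_subtype, hG,
          ne_eq, Subtype.mk.injEq]
      · have h' : Fintype.card {x : V // ¬ x = v} =
            Fintype.card V - Fintype.card {x : V // x = v} :=
          Fintype.card_subtype_compl _
        simp only [Fintype.card_subtype_eq, hcard] at h'
        convert h'
        omega
    have e2 : ∀ (i : Fintype ↥{x : V | x ≠ v ∧ x ≠ c}) (d : DecidableEq ↥{x : V | x ≠ v ∧ x ≠ c}),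
        @f _ i d (G.induce {x : V | x ≠ v ∧ x ≠ c}) = Pone ^ m := by
      intro i d
      rw [f_irrel f i inferInstance d inferInstance]
      apply bot_val f ⟨h0, h1, h2, h3⟩
      · rintro ⟨x, hx1, hx2⟩ ⟨y, hy1, hy2⟩ hxy
        simp only [SimpleGraph.comap_adj, Function.Embedding.coe_subtype] at hxy
        rcases hedge _ _ hxy with h | h
        · exact hx2 h
        · exact hy2 h
      · have h' : Fintype.card {x : V // ¬ (x = v ∨ x = c)} =
            Fintype.card V - Fintype.card {x : V // x = v ∨ x = c} :=
          Fintype.card_subtype_compl _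
        have h2card : Fintype.card {x : V // x = v ∨ x = c} = 2 := by
          rw [← Nat.card_eq_fintype_card, Nat.card_eq_two_iff]
          refine ⟨⟨v, Or.inl rfl⟩, ⟨c, Or.inr rfl⟩, by simp [hvc], ?_⟩
          ext ⟨x, hx⟩
          simp only [Set.mem_insert_iff, Set.mem_singleton_iff, Set.mem_univ, iff_true,
            Subtype.mk.injEq]
          rcases hx with rfl | rfl
          · exact Or.inl rfl
          · exact Or.inr rfl
        rw [h2card, hcard] at h'
        have heq : Fintype.card ↥{x : V | x ≠ v ∧ x ≠ c} =
            Fintype.card {x : V // ¬ (x = v ∨ x = c)} := by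
          apply Fintype.card_congr
          apply Equiv.subtypeEquivRight
          intro x; simp [not_or]
        rw [heq, h']
        omega
    rw [key, e1, e2, gg_step]

lemma gg_closed (m : ℕ) : gg (m+4) =
    Z ^ (m+2) / A ^ (m+4) + ((Z ^ (m+3) + Z ^ (m+1)) / A ^ (m+3)) * Pone +
    ∑ i ∈ Finset.range (m+1), (Z ^ i / A ^ (i+2)) * Pone ^ (m+2-i) := by
  induction m with
  | zero =>
    have h4 : gg 4 = (Z / A) * gg 3 + (1 / A ^ 2) * Pone ^ 2 := rfl
    have h3 : gg 3 = (Z / A) * gg 2 + (1 / A ^ 2) * Pone ^ 1 := rfl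
    have h2 : gg 2 = (Z / A) * gg 1 + (1 / A ^ 2) * Pone ^ 0 := rfl
    have h1 : gg 1 = Pone := rfl
    rw [h4, h3, h2, h1, Finset.sum_range_one]
    norm_num
    ring
  | succ m ih =>
    have hstep : gg (m+1+4) = (Z / A) * gg (m+4) + (1 / A ^ 2) * Pone ^ (m+3) := rfl
    have hr : ∑ i ∈ Finset.range (m+1+1), (Z ^ i / A ^ (i+2)) * Pone ^ (m+1+2-i) =
        (Z / A) * ∑ i ∈ Finset.range (m+1), (Z ^ i / A ^ (i+2)) * Pone ^ (m+2-i) +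
        (1 / A ^ 2) * Pone ^ (m+3) := by
      rw [Finset.sum_range_succ', Finset.mul_sum]
      congr 1
      · refine Finset.sum_congr rfl (fun i _ => ?_)
        have h' : m+1+2-(i+1) = m+2-i := by omega
        rw [h']
        ring
    rw [hstep, ih, hr]
    ring


/-- The HOMFLY polynomial of the star `S_n` on `n ≥ 4` vertices, where
`P₁ = (z+z⁻¹)/a − z⁻¹/a³` is the value on a single vertex. -/
theorem homfly_star (f : GraphFun) (hf : HomflyRules f) (n : ℕ) (hn : 4 ≤ n) :
    f (Fin n) (starGraph n) =
      Z ^ (n - 2) / A ^ n +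
      ((Z ^ (n - 1) + Z ^ (n - 3)) / A ^ (n - 1)) * ((Z + Z⁻¹) / A - Z⁻¹ / A ^ 3) +
      ∑ k ∈ Finset.Icc 2 (n - 2),
        (Z ^ (k - 2) / A ^ k) * ((Z + Z⁻¹) / A - Z⁻¹ / A ^ 3) ^ (n - k) := by
  obtain ⟨m, rfl⟩ : ∃ m, n = m + 4 := ⟨n - 4, by omega⟩
  have hadj : ∀ x y : Fin (m+4), (starGraph (m+4)).Adj x y ↔
      (x = 0 ∧ y ≠ 0) ∨ (y = 0 ∧ x ≠ 0) := by
    intro x y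
    have hz : ∀ x : Fin (m+4), (x : ℕ) = 0 ↔ x = 0 := by
      intro x
      constructor
      · intro h; exact Fin.ext (by simp [h])
      · rintro rfl; rfl
    simp only [starGraph, SimpleGraph.fromRel_adj, hz]
    constructor
    · rintro ⟨hne, h | h⟩
      · exact Or.inl ⟨h, fun hy => hne (h.trans hy.symm)⟩
      · exact Or.inr ⟨h, fun hx => hne (hx.trans h.symm)⟩
    · rintro (⟨hx, hy⟩ | ⟨hy, hx⟩)
      · exact ⟨fun hh => hy (hh ▸ hx), Or.inl hx⟩
      · exact ⟨fun hh => hx (hh.symm ▸ hy), Or.inr hy⟩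
  rw [star_val f hf (m+4) (Fin (m+4)) (starGraph (m+4)) 0 hadj (by simp), gg_closed]
  have hIcc : ∑ k ∈ Finset.Icc 2 (m+4-2),
      (Z ^ (k-2) / A ^ k) * ((Z + Z⁻¹) / A - Z⁻¹ / A ^ 3) ^ (m+4-k) =
      ∑ i ∈ Finset.range (m+1), (Z ^ i / A ^ (i+2)) * Pone ^ (m+2-i) := by
    rw [show m+4-2 = m+2 from rfl, ← Finset.Ico_add_one_right_eq_Icc, Finset.sum_Ico_eq_sum_range]
    refine Finset.sum_congr (by rw [show m+2+1-2 = m+1 from rfl]) (fun i _ => ?_)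
    have e1 : 2+i-2 = i := by omega
    have e2 : m+4-(2+i) = m+2-i := by omega
    rw [e1, e2, show 2+i = i+2 by ring]
    rfl
  rw [hIcc, show m+4-2 = m+2 from rfl, show m+4-1 = m+3 from rfl, show m+4-3 = m+1 from rfl]
  rfl
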